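/- Let s ∈ (1, ∞), let ω ⊆ ℝ² be a measurable set, let f : ω × ℝ² → [0, ∞) be measurable with velocity average ρ_f(y) = ∫_{ℝ²} f(y,v) dv, and let χ : ω × ℝ → ℂ be measurable such that for a.e. y ∈ ω the function z ↦ χ(y,z) lies in H¹₀(0,1) with derivative z ↦ g(y,z) and has unit L²(0,1)-norm: ∫₀¹ |χ(y,z)|² dz = 1. Then there is a constant C depending only on s such that ‖ρ_f(y)|χ(y,z)|²‖_{L^{(5s−3)/(3s−1)}(ω×(0,1))} ≤ C · ‖ρ_f‖_{L^{(2s−1)/s}(ω)}^{2(2s−1)/(5s−3)} · ( ∫_ω ρ_f(y) ( ∫₀¹ |g(y,z)|² dz ) dy )^{(s−1)/(5s−3)}, in the extended nonnegative reals. -/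

import Mathlib

open MeasureTheory
open scoped ENNReal

/-- The plane `ℝ²` with the Euclidean norm. -/
abbrev Plane := EuclideanSpace ℝ (Fin 2)

/-- `φ` lies in `H¹₀(0,1)` with derivative `g` (complex-valued version). -/
def InH10C (φ g : ℝ → ℂ) : Prop :=
  Measurable g ∧ IntegrableOn (fun t => ‖g t‖ ^ 2) (Set.Ioo 0 1) ∧
    (∀ x ∈ Set.Icc (0:ℝ) 1, φ x = ∫ t in (0:ℝ)..x, g t) ∧ φ 1 = 0

lemma g_int {φ g : ℝ → ℂ} (h : InH10C φ g) : IntegrableOn g (Set.Icc 0 1) := by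
  obtain ⟨hgm, hg2, -, -⟩ := h
  have h1 : IntegrableOn g (Set.Ioo 0 1) := by
    refine Integrable.mono' (g := fun t => 1 + ‖g t‖ ^ 2)
      ((integrable_const 1).add hg2) (hgm.aestronglyMeasurable.restrict) ?_
    filter_upwards with t
    have h0 : (0:ℝ) ≤ ‖g t‖ := norm_nonneg _
    rcases le_or_gt (‖g t‖) 1 with h|h
    · simpa using le_add_of_le_of_nonneg h (by positivity)
    · have : ‖g t‖ ≤ ‖g t‖ ^ 2 := by nlinarith
      simpa using this.trans (by linarith)
  exact h1.congr_set_ae (MeasureTheory.Ioo_ae_eq_Icc).symm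

lemma phi_cont {φ g : ℝ → ℂ} (h : InH10C φ g) : ContinuousOn φ (Set.Icc 0 1) := by
  have := intervalIntegral.continuousOn_primitive_interval (a := (0:ℝ)) (b := 1)
    (μ := volume) (f := g) (by simpa [Set.uIcc_of_le (zero_le_one)] using g_int h)
  refine ContinuousOn.congr (by simpa [Set.uIcc_of_le (zero_le_one)] using this) ?_
  intro x hx
  exact h.2.2.1 x hx

lemma phig_int {φ g : ℝ → ℂ} (h : InH10C φ g) :
    IntegrableOn (fun t => ‖φ t‖ * ‖g t‖) (Set.Ioo 0 1) := by
  obtain ⟨B, hB⟩ := isCompact_Icc.exists_bound_of_continuousOn (phi_cont h)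
  have hgI : IntegrableOn g (Set.Ioo 0 1) := (g_int h).mono_set Set.Ioo_subset_Icc_self
  have hmeas : AEStronglyMeasurable (fun t => ‖φ t‖ * ‖g t‖)
      (volume.restrict (Set.Ioo 0 1)) := by
    have h1 : AEStronglyMeasurable φ (volume.restrict (Set.Ioo (0:ℝ) 1)) :=
      ((phi_cont h).aestronglyMeasurable measurableSet_Icc).mono_measure
        (Measure.restrict_mono Set.Ioo_subset_Icc_self le_rfl)
    exact h1.norm.mul (h.1.aestronglyMeasurable.norm)
  refine Integrable.mono' (g := fun t => B * ‖g t‖)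
    (hgI.norm.const_mul B) hmeas ?_
  filter_upwards [ae_restrict_mem (μ := volume) (measurableSet_Ioo (a := (0:ℝ)) (b := 1))] with t ht
  have h1 : ‖φ t‖ ≤ B := by
    simpa using hB t (Set.Ioo_subset_Icc_self ht)
  have h2 : (0:ℝ) ≤ ‖g t‖ := norm_nonneg _
  have h3 : (0:ℝ) ≤ ‖φ t‖ := norm_nonneg _
  rw [Real.norm_of_nonneg (by positivity)]
  exact mul_le_mul_of_nonneg_right h1 h2

lemma pointwise_bound {φ g : ℝ → ℂ} (h : InH10C φ g) {x : ℝ} (hx : x ∈ Set.Icc (0:ℝ) 1) :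
    ‖φ x‖ ^ 2 ≤ 2 * ∫ t in Set.Ioo (0:ℝ) 1, ‖φ t‖ * ‖g t‖ := by
  obtain ⟨hgm, hg2, hφdef, hφ1⟩ := h
  have h' : InH10C φ g := ⟨hgm, hg2, hφdef, hφ1⟩
  set I : Set ℝ := Set.Ioo 0 1 with hI
  have hgI : IntegrableOn g (Set.Icc 0 1) := g_int h'
  have hφIoo : ∀ y ∈ Set.Icc (0:ℝ) 1, φ y = ∫ t in Set.Ioo 0 y, g t := by
    intro y hy
    rw [hφdef y hy, intervalIntegral.integral_of_le hy.1, integral_Ioc_eq_integral_Ioo]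
  set μ2 : Measure (ℝ × ℝ) := (volume : Measure ℝ).prod volume with hμ2
  set K : ℝ × ℝ → ℂ := fun p => g p.1 * (starRingEnd ℂ) (g p.2) with hKdef
  have hKint : ∀ u v : Set ℝ, u ⊆ Set.Icc 0 1 → v ⊆ Set.Icc 0 1 → IntegrableOn K (u ×ˢ v) μ2 := by
    intro u v hu hv
    rw [IntegrableOn, hμ2, ← Measure.prod_restrict]
    have hc : Integrable (fun t => (starRingEnd ℂ) (g t)) (volume.restrict v) := by
      refine Integrable.mono' (hgI.mono_set hv).norm
        ((continuous_star.measurable.comp hgm).aestronglyMeasurable)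
        (Filter.Eventually.of_forall fun t => by simp)
    exact Integrable.mul_prod (hgI.mono_set hu) hc
  have key : ∀ y ∈ Set.Icc (0:ℝ) 1,
      φ y * (starRingEnd ℂ) (φ y) = ∫ p in (Set.Ioo 0 y) ×ˢ (Set.Ioo 0 y), K p ∂μ2 := by
    intro y hy
    rw [hμ2, hKdef]
    simp only
    have hsp := MeasureTheory.setIntegral_prod_mul (μ := (volume : Measure ℝ))
      (ν := (volume : Measure ℝ)) g (fun t => (starRingEnd ℂ) (g t)) (Set.Ioo 0 y) (Set.Ioo 0 y)
    rw [hsp, integral_conj, ← hφIoo y hy]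
  have hT0 : ∫ p in I ×ˢ I, K p ∂μ2 = 0 := by
    have := key 1 ⟨zero_le_one, le_rfl⟩
    rw [hφ1] at this
    simpa [hI] using this.symm
  set S : Set (ℝ × ℝ) := Set.Ioo 0 x ×ˢ Set.Ioo 0 x with hS
  set E₁ : Set (ℝ × ℝ) := (Set.Ioo x 1 ×ˢ I) ∩ {p | p.2 < p.1} with hE₁
  set E₂ : Set (ℝ × ℝ) := (I ×ˢ Set.Ioo x 1) ∩ {p | p.1 < p.2} with hE₂
  have hE₁m : MeasurableSet E₁ :=
    (measurableSet_Ioo.prod measurableSet_Ioo).inter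
      (measurableSet_lt measurable_snd measurable_fst)
  have hE₂m : MeasurableSet E₂ :=
    (measurableSet_Ioo.prod measurableSet_Ioo).inter
      (measurableSet_lt measurable_fst measurable_snd)
  have hIcc : I ⊆ Set.Icc 0 1 := Set.Ioo_subset_Icc_self
  have hx1 : Set.Ioo x 1 ⊆ Set.Icc 0 1 := fun t ht => ⟨le_trans hx.1 ht.1.le, ht.2.le⟩
  have hE₁int : IntegrableOn K E₁ μ2 :=
    (hKint _ _ hx1 hIcc).mono_set Set.inter_subset_left
  have hE₂int : IntegrableOn K E₂ μ2 :=
    (hKint _ _ hIcc hx1).mono_set Set.inter_subset_left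
  -- null sets
  have hdiag : μ2 {p : ℝ × ℝ | p.1 = p.2} = 0 := by
    have hdm : MeasurableSet {p : ℝ × ℝ | p.1 = p.2} :=
      measurableSet_eq_fun measurable_fst measurable_snd
    rw [hμ2, Measure.prod_apply hdm]
    have : ∀ a : ℝ, (Prod.mk a ⁻¹' {p : ℝ × ℝ | p.1 = p.2}) = {a} := by
      intro a; ext z; simp [eq_comm]
    simp [this]
  have hvert : μ2 ({x} ×ˢ (Set.univ : Set ℝ)) = 0 := by
    rw [hμ2, Measure.prod_prod]; simp
  have hhor : μ2 ((Set.univ : Set ℝ) ×ˢ ({x} : Set ℝ)) = 0 := by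
    rw [hμ2, Measure.prod_prod]; simp
  have hN : μ2 ({p : ℝ × ℝ | p.1 = p.2} ∪ ({x} ×ˢ (Set.univ : Set ℝ))
      ∪ ((Set.univ : Set ℝ) ×ˢ ({x} : Set ℝ))) = 0 :=
    measure_union_null (measure_union_null hdiag hvert) hhor
  -- a.e. set equality
  have hsub1 : E₁ ∪ E₂ ⊆ (I ×ˢ I) \ S := by
    rintro ⟨t, u⟩ (⟨⟨ht, hu⟩, hlt⟩ | ⟨⟨ht, hu⟩, hlt⟩)
    · refine ⟨⟨⟨lt_of_le_of_lt hx.1 ht.1, ht.2⟩, hu⟩, ?_⟩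
      rintro ⟨ht', -⟩
      exact absurd ht'.2 (not_lt.mpr ht.1.le)
    · refine ⟨⟨ht, ⟨lt_of_le_of_lt hx.1 hu.1, hu.2⟩⟩, ?_⟩
      rintro ⟨-, hu'⟩
      exact absurd hu'.2 (not_lt.mpr hu.1.le)
  have hsub2 : ((I ×ˢ I) \ S) \ (E₁ ∪ E₂) ⊆ {p : ℝ × ℝ | p.1 = p.2}
      ∪ ({x} ×ˢ (Set.univ : Set ℝ)) ∪ ((Set.univ : Set ℝ) ×ˢ ({x} : Set ℝ)) := by
    rintro ⟨t, u⟩ ⟨⟨⟨ht, hu⟩, hS'⟩, hE⟩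
    by_contra hcon
    simp only [Set.mem_union, Set.mem_setOf_eq, Set.mem_prod, Set.mem_singleton_iff,
      Set.mem_univ, and_true, true_and, not_or] at hcon
    obtain ⟨⟨hne, hnx⟩, hnu⟩ := hcon
    rcases lt_or_gt_of_ne hne with hlt | hgt
    · rcases lt_or_gt_of_ne hnu with hux | hux
      · exact hS' ⟨⟨ht.1, lt_trans hlt hux⟩, ⟨hu.1, hux⟩⟩
      · exact hE (Or.inr ⟨⟨ht, ⟨hux, hu.2⟩⟩, hlt⟩)
    · rcases lt_or_gt_of_ne hnx with htx | htx
      · exact hS' ⟨⟨ht.1, htx⟩, ⟨hu.1, lt_trans hgt htx⟩⟩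
      · exact hE (Or.inl ⟨⟨⟨htx, ht.2⟩, hu⟩, hgt⟩)
  have haeeq : ((I ×ˢ I) \ S : Set (ℝ × ℝ)) =ᵐ[μ2] (E₁ ∪ E₂ : Set (ℝ × ℝ)) := by
    rw [MeasureTheory.ae_eq_set]
    constructor
    · exact measure_mono_null hsub2 hN
    · rw [Set.diff_eq_empty.mpr hsub1]; exact measure_empty
  have hdiff : ∫ p in (I ×ˢ I) \ S, K p ∂μ2 = -(φ x * (starRingEnd ℂ) (φ x)) := by
    rw [integral_diff (measurableSet_Ioo.prod measurableSet_Ioo) (hKint I I hIcc hIcc)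
      (Set.prod_mono (Set.Ioo_subset_Ioo le_rfl hx.2) (Set.Ioo_subset_Ioo le_rfl hx.2)),
      hT0, key x hx, zero_sub]
  have hswap : MeasurePreserving Prod.swap μ2 μ2 := Measure.measurePreserving_swap
  have hpre : Prod.swap ⁻¹' E₂ = E₁ := by
    ext ⟨t, u⟩
    simp only [hE₁, hE₂, Set.mem_preimage, Prod.swap_prod_mk, Set.mem_inter_iff, Set.mem_prod,
      Set.mem_setOf_eq]
    tauto
  have hE₂eq : ∫ p in E₂, K p ∂μ2 = (starRingEnd ℂ) (∫ p in E₁, K p ∂μ2) := by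
    have hemb : MeasurableEmbedding (Prod.swap : ℝ × ℝ → ℝ × ℝ) :=
      MeasurableEquiv.prodComm.measurableEmbedding
    have h1 := hswap.setIntegral_preimage_emb hemb K E₂
    rw [hpre] at h1
    rw [← h1, ← integral_conj]
    refine setIntegral_congr_fun hE₁m fun p _ => ?_
    simp [hKdef, mul_comm]
  have hdisj : Disjoint E₁ E₂ := by
    rw [Set.disjoint_left]
    rintro ⟨t, u⟩ ⟨-, h1⟩ ⟨-, h2⟩
    simp only [Set.mem_setOf_eq] at h1 h2
    exact lt_asymm h1 h2
  have hsplit : ∫ p in (I ×ˢ I) \ S, K p ∂μ2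
      = (∫ p in E₁, K p ∂μ2) + (starRingEnd ℂ) (∫ p in E₁, K p ∂μ2) := by
    rw [setIntegral_congr_set haeeq, setIntegral_union hdisj hE₂m hE₁int hE₂int, hE₂eq]
  have hE₁eq : ∫ p in E₁, K p ∂μ2 = ∫ t in Set.Ioo x 1, g t * (starRingEnd ℂ) (φ t) := by
    rw [hE₁, ← setIntegral_indicator (measurableSet_lt measurable_snd measurable_fst), hμ2,
      setIntegral_prod _ ((hKint _ _ hx1 hIcc).indicator
        (measurableSet_lt measurable_snd measurable_fst))]
    refine setIntegral_congr_fun measurableSet_Ioo fun t ht => ?_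
    have hptw : ∀ u : ℝ, Set.indicator {p : ℝ × ℝ | p.2 < p.1} K (t, u)
        = Set.indicator (Set.Iio t) (fun u => g t * (starRingEnd ℂ) (g u)) u := by
      intro u
      by_cases hu : u < t <;> simp [Set.indicator_apply, hu, hKdef]
    simp only [hptw]
    rw [setIntegral_indicator measurableSet_Iio]
    have hIinter : I ∩ Set.Iio t = Set.Ioo 0 t := by
      rw [hI, Set.Ioo_inter_Iio, min_eq_right ht.2.le]
    rw [hIinter, integral_const_mul, integral_conj,
      ← hφIoo t ⟨le_trans hx.1 ht.1.le, ht.2.le⟩]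
  set z : ℂ := ∫ t in Set.Ioo x 1, g t * (starRingEnd ℂ) (φ t) with hz
  have hre : Complex.normSq (φ x) = -(2 * z.re) := by
    have h2 : (Complex.normSq (φ x) : ℂ) = -(z + (starRingEnd ℂ) z) := by
      rw [← Complex.mul_conj, ← hE₁eq]
      rw [hsplit] at hdiff
      linear_combination hdiff
    rw [Complex.add_conj] at h2
    exact_mod_cast h2
  have habs : ‖φ x‖ ^ 2 ≤ 2 * ‖z‖ := by
    rw [← Complex.sq_norm] at hre
    rw [hre]
    have := Complex.abs_re_le_norm z
    have := abs_le.mp this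
    nlinarith [this.1, this.2]
  have hzle : ‖z‖ ≤ ∫ t in Set.Ioo x 1, ‖φ t‖ * ‖g t‖ := by
    have h1 : ‖z‖ ≤ ∫ t in Set.Ioo x 1, ‖g t * (starRingEnd ℂ) (φ t)‖ := by
      rw [hz]; exact norm_integral_le_integral_norm _
    have h2 : ∫ t in Set.Ioo x 1, ‖g t * (starRingEnd ℂ) (φ t)‖
        = ∫ t in Set.Ioo x 1, ‖φ t‖ * ‖g t‖ :=
      setIntegral_congr_fun measurableSet_Ioo fun t _ => by
        simp [mul_comm]
    rw [← h2]
    exact h1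
  have hmono : ∫ t in Set.Ioo x 1, ‖φ t‖ * ‖g t‖
      ≤ ∫ t in I, ‖φ t‖ * ‖g t‖ := by
    refine setIntegral_mono_set (phig_int h') ?_ ?_
    · filter_upwards with t
      exact mul_nonneg (norm_nonneg _) (norm_nonneg _)
    · exact HasSubset.Subset.eventuallyLE (Set.Ioo_subset_Ioo hx.1 le_rfl)
  linarith [habs, hzle, hmono]

lemma perfn {p : ℝ} (hp : 1 ≤ p) {φ g : ℝ → ℂ} (h : InH10C φ g)
    (hnorm : (∫ z in Set.Ioo (0:ℝ) 1, ‖φ z‖ ^ 2) = 1) :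
    ∫⁻ z in Set.Ioo (0:ℝ) 1, (ENNReal.ofReal (‖φ z‖ ^ 2)) ^ p
      ≤ 2 ^ (p - 1) *
        (∫⁻ z in Set.Ioo (0:ℝ) 1, ENNReal.ofReal (‖g z‖ ^ 2)) ^ ((p - 1)/2) := by
  set I : Set ℝ := Set.Ioo 0 1 with hI
  set G : ℝ≥0∞ := ∫⁻ z in I, ENNReal.ofReal (‖g z‖ ^ 2) with hG
  have haesm : AEStronglyMeasurable φ (volume.restrict I) :=
    ((phi_cont h).aestronglyMeasurable measurableSet_Icc).mono_measure
      (Measure.restrict_mono Set.Ioo_subset_Icc_self le_rfl)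
  have hφ2int : IntegrableOn (fun z => ‖φ z‖ ^ 2) I := by
    have : ContinuousOn (fun z => ‖φ z‖ ^ 2) (Set.Icc 0 1) := by
      exact (phi_cont h).norm.pow 2
    exact (this.integrableOn_Icc).mono_set Set.Ioo_subset_Icc_self
  have hone : ∫⁻ z in I, ENNReal.ofReal (‖φ z‖ ^ 2) = 1 := by
    rw [← ofReal_integral_eq_lintegral_ofReal hφ2int
      (Filter.Eventually.of_forall fun z => by positivity), hnorm, ENNReal.ofReal_one]
  set M : ℝ := 2 * ∫ t in I, ‖φ t‖ * ‖g t‖ with hM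
  have hMint := phig_int h
  have hM0 : 0 ≤ M := by
    have : 0 ≤ ∫ t in I, ‖φ t‖ * ‖g t‖ :=
      integral_nonneg fun t => mul_nonneg (norm_nonneg _) (norm_nonneg _)
    linarith
  have hsq : ∀ a : ℝ, 0 ≤ a → (ENNReal.ofReal a) ^ (2:ℝ) = ENNReal.ofReal (a ^ 2) := by
    intro a ha
    rw [show ((2:ℝ)) = ((2:ℕ):ℝ) by norm_num, ENNReal.rpow_natCast, ← ENNReal.ofReal_pow ha]
  have hCS : ENNReal.ofReal M ≤ 2 * G ^ ((1:ℝ)/2) := by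
    have h22 : Real.HolderConjugate 2 2 := Real.holderConjugate_iff.mpr ⟨one_lt_two, by norm_num⟩
    have haφ : AEMeasurable (fun z => ENNReal.ofReal (‖φ z‖)) (volume.restrict I) := by
      refine ENNReal.measurable_ofReal.comp_aemeasurable ?_
      exact haesm.norm.aemeasurable
    have hag : AEMeasurable (fun z => ENNReal.ofReal (‖g z‖)) (volume.restrict I) := by
      refine ENNReal.measurable_ofReal.comp_aemeasurable ?_
      exact h.1.norm.aemeasurable
    have hH := ENNReal.lintegral_mul_le_Lp_mul_Lq (volume.restrict I) h22 haφ hag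
    have hlhs : ∫⁻ z in I, (fun z => ENNReal.ofReal (‖φ z‖)) z
        * (fun z => ENNReal.ofReal (‖g z‖)) z
        = ENNReal.ofReal (M / 2) := by
      have hM2 : M / 2 = ∫ t in I, ‖φ t‖ * ‖g t‖ := by
        rw [hM]; ring
      rw [hM2, ofReal_integral_eq_lintegral_ofReal hMint (Filter.Eventually.of_forall fun z =>
        mul_nonneg (norm_nonneg _) (norm_nonneg _))]
      exact lintegral_congr fun z => (ENNReal.ofReal_mul (norm_nonneg _)).symm
    have hf2 : ∫⁻ z in I, (fun z => ENNReal.ofReal (‖φ z‖)) z ^ (2:ℝ) = 1 := by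
      rw [← hone]
      exact lintegral_congr fun z => hsq _ (norm_nonneg _)
    have hg2 : ∫⁻ z in I, (fun z => ENNReal.ofReal (‖g z‖)) z ^ (2:ℝ) = G := by
      rw [hG]
      exact lintegral_congr fun z => hsq _ (norm_nonneg _)
    simp only [Pi.mul_apply] at hH
    rw [hlhs, hf2, hg2] at hH
    simp only [ENNReal.one_rpow, one_mul] at hH
    have : ENNReal.ofReal M = 2 * ENNReal.ofReal (M / 2) := by
      rw [← ENNReal.ofReal_ofNat, ← ENNReal.ofReal_mul (by norm_num)]
      ring_nf
    rw [this]
    exact mul_le_mul_right hH 2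
  -- pointwise bound and conclusion
  have hmain : ∫⁻ z in I, (ENNReal.ofReal (‖φ z‖ ^ 2)) ^ p
      ≤ (ENNReal.ofReal M) ^ (p - 1) := by
    have hle : ∫⁻ z in I, (ENNReal.ofReal (‖φ z‖ ^ 2)) ^ p
        ≤ ∫⁻ z in I, (ENNReal.ofReal M) ^ (p - 1) * ENNReal.ofReal (‖φ z‖ ^ 2) := by
      refine lintegral_mono_ae ?_
      filter_upwards [ae_restrict_mem (μ := volume) measurableSet_Ioo] with z hz
      have hb : ENNReal.ofReal (‖φ z‖ ^ 2) ≤ ENNReal.ofReal M :=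
        ENNReal.ofReal_le_ofReal (pointwise_bound h (Set.Ioo_subset_Icc_self hz))
      have ha : (ENNReal.ofReal (‖φ z‖ ^ 2)) ^ p
          = (ENNReal.ofReal (‖φ z‖ ^ 2)) ^ (p - 1)
            * (ENNReal.ofReal (‖φ z‖ ^ 2)) ^ (1:ℝ) := by
        rw [← ENNReal.rpow_add_of_nonneg _ _ (by linarith) zero_le_one]
        norm_num
      rw [ha, ENNReal.rpow_one]
      exact mul_le_mul_left (ENNReal.rpow_le_rpow hb (by linarith)) _
    rw [lintegral_const_mul' _ _ (ENNReal.rpow_ne_top_of_nonneg (by linarith)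
      ENNReal.ofReal_ne_top), hone, mul_one] at hle
    exact hle
  refine hmain.trans ?_
  calc (ENNReal.ofReal M) ^ (p - 1) ≤ (2 * G ^ ((1:ℝ)/2)) ^ (p - 1) :=
      ENNReal.rpow_le_rpow hCS (by linarith)
    _ = 2 ^ (p - 1) * G ^ ((p - 1)/2) := by
      rw [ENNReal.mul_rpow_of_nonneg _ _ (by linarith : (0:ℝ) ≤ p - 1), ← ENNReal.rpow_mul]
      congr 1
      ring_nf

lemma holder_nonmeas {α : Type*} [MeasurableSpace α] {μ : Measure α} {ρ G : α → ℝ≥0∞}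
    (hρ : Measurable ρ) {p : ℝ} (hp1 : 1 < p) (hp3 : p < 3) :
    ∫⁻ y, ρ y ^ p * G y ^ ((p - 1)/2) ∂μ
      ≤ (∫⁻ y, ρ y ^ ((p + 1)/(3 - p)) ∂μ) ^ ((3 - p)/2)
        * (∫⁻ y, ρ y * G y ∂μ) ^ ((p - 1)/2) := by
  have hp0 : (0:ℝ) < p := by linarith
  have hpm1 : (0:ℝ) < p - 1 := by linarith
  have h3p : (0:ℝ) < 3 - p := by linarith
  obtain ⟨w, hwm, hwle, hwe⟩ :=
    exists_measurable_le_lintegral_eq μ (fun y => ρ y ^ p * G y ^ ((p - 1)/2))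
  set G'' : α → ℝ≥0∞ := fun y =>
    if w y = 0 then 0 else (if ρ y = ∞ then ∞ else (w y * (ρ y ^ p)⁻¹) ^ (2/(p - 1)))
    with hG''
  have hG''m : Measurable G'' := by
    refine Measurable.ite (hwm (measurableSet_singleton 0)) measurable_const ?_
    exact Measurable.ite (hρ (measurableSet_singleton ∞)) measurable_const
      (((hwm.mul ((hρ.pow_const p).inv))).pow_const _)
  have hclaim1 : ∀ y, w y ≤ ρ y ^ p * G'' y ^ ((p - 1)/2) := by
    intro y
    by_cases hw : w y = 0
    · simp [hw]
    by_cases hρi : ρ y = ∞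
    · simp only [hG'', hw, hρi, if_false, if_true, if_neg hw]
      rw [ENNReal.top_rpow_of_pos hp0, ENNReal.top_rpow_of_pos (by positivity)]
      simp
    have hρ0 : ρ y ≠ 0 := by
      intro h0
      apply hw
      have := hwle y
      simp only [h0, ENNReal.zero_rpow_of_pos hp0, zero_mul] at this
      exact le_antisymm this (by positivity)
    have hc0 : ρ y ^ p ≠ 0 := by simp [ENNReal.rpow_eq_zero_iff, hρ0, hρi, hp0.le]
    have hct : ρ y ^ p ≠ ∞ := by simp [ENNReal.rpow_eq_top_iff, hρ0, hρi]
    simp only [hG'', if_neg hw, if_neg hρi]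
    rw [← ENNReal.rpow_mul]
    have hexp : 2/(p - 1) * ((p - 1)/2) = 1 := by field_simp
    rw [hexp, ENNReal.rpow_one, mul_comm (w y), ← mul_assoc, ENNReal.mul_inv_cancel hc0 hct,
      one_mul]
  have hclaim2 : ∀ y, ρ y * G'' y ≤ ρ y * G y := by
    intro y
    by_cases hw : w y = 0
    · simp [hG'', hw]
    by_cases hρ0 : ρ y = 0
    · simp [hρ0]
    by_cases hρi : ρ y = ∞
    · have hG0 : G y ≠ 0 := by
        intro h0
        apply hw
        have := hwle y
        simp only [h0, ENNReal.zero_rpow_of_pos (by positivity : (0:ℝ) < (p-1)/2),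
          mul_zero] at this
        exact le_antisymm this (by positivity)
      rw [hρi, ENNReal.top_mul hG0]
      exact le_top
    have hc0 : ρ y ^ p ≠ 0 := by simp [ENNReal.rpow_eq_zero_iff, hρ0, hρi, hp0.le]
    have hct : ρ y ^ p ≠ ∞ := by simp [ENNReal.rpow_eq_top_iff, hρ0, hρi]
    refine mul_le_mul_right ?_ _
    simp only [hG'', if_neg hw, if_neg hρi]
    have hstep : w y * (ρ y ^ p)⁻¹ ≤ G y ^ ((p - 1)/2) := by
      have h1 := mul_le_mul_left (hwle y) (ρ y ^ p)⁻¹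
      calc w y * (ρ y ^ p)⁻¹ ≤ ρ y ^ p * G y ^ ((p - 1)/2) * (ρ y ^ p)⁻¹ := h1
        _ = G y ^ ((p - 1)/2) := by
            rw [mul_comm (ρ y ^ p), mul_assoc, ENNReal.mul_inv_cancel hc0 hct, mul_one]
    calc (w y * (ρ y ^ p)⁻¹) ^ (2/(p - 1)) ≤ (G y ^ ((p - 1)/2)) ^ (2/(p - 1)) :=
        ENNReal.rpow_le_rpow hstep (by positivity)
      _ = G y := by
          rw [← ENNReal.rpow_mul]
          have : (p - 1)/2 * (2/(p - 1)) = 1 := by field_simp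
          rw [this, ENNReal.rpow_one]
  -- now Hölder with measurable G''
  have hconj : ((2:ℝ)/(3 - p)).HolderConjugate (2/(p - 1)) := by
    rw [Real.holderConjugate_iff]
    constructor
    · rw [lt_div_iff₀ h3p]; linarith
    · rw [inv_div, inv_div]
      ring
  have hholder := ENNReal.lintegral_mul_le_Lp_mul_Lq μ hconj
    ((hρ.pow_const ((p + 1)/2)).aemeasurable)
    (((hρ.mul hG''m).pow_const ((p - 1)/2)).aemeasurable)
  calc ∫⁻ y, ρ y ^ p * G y ^ ((p - 1)/2) ∂μ = ∫⁻ y, w y ∂μ := hwe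
    _ ≤ ∫⁻ y, ρ y ^ p * G'' y ^ ((p - 1)/2) ∂μ := lintegral_mono hclaim1
    _ = ∫⁻ y, (ρ y ^ ((p + 1)/2)) * ((ρ y * G'' y) ^ ((p - 1)/2)) ∂μ := by
        refine lintegral_congr fun y => ?_
        rw [ENNReal.mul_rpow_of_nonneg _ _ (by positivity : (0:ℝ) ≤ (p-1)/2), ← mul_assoc,
          ← ENNReal.rpow_add_of_nonneg _ _ (by positivity : (0:ℝ) ≤ (p+1)/2)
            (by positivity : (0:ℝ) ≤ (p-1)/2),
          show (p + 1)/2 + (p - 1)/2 = p by ring]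
    _ ≤ (∫⁻ y, (ρ y ^ ((p + 1)/2)) ^ ((2:ℝ)/(3 - p)) ∂μ) ^ (1/((2:ℝ)/(3 - p)))
        * (∫⁻ y, ((ρ y * G'' y) ^ ((p - 1)/2)) ^ ((2:ℝ)/(p - 1)) ∂μ) ^ (1/((2:ℝ)/(p - 1))) :=
        hholder
    _ = (∫⁻ y, ρ y ^ ((p + 1)/(3 - p)) ∂μ) ^ ((3 - p)/2)
        * (∫⁻ y, ρ y * G'' y ∂μ) ^ ((p - 1)/2) := by
        rw [one_div_div, one_div_div]
        congr 1
        · congr 1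
          · refine lintegral_congr fun y => ?_
            rw [← ENNReal.rpow_mul]
            congr 1
            field_simp
        · congr 1
          refine lintegral_congr fun y => ?_
          rw [← ENNReal.rpow_mul]
          have : (p - 1)/2 * (2/(p - 1)) = 1 := by field_simp
          rw [this, ENNReal.rpow_one]
    _ ≤ (∫⁻ y, ρ y ^ ((p + 1)/(3 - p)) ∂μ) ^ ((3 - p)/2)
        * (∫⁻ y, ρ y * G y ∂μ) ^ ((p - 1)/2) := by
        refine mul_le_mul_right ?_ _
        exact ENNReal.rpow_le_rpow (lintegral_mono hclaim2) (by positivity)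

theorem single_subband_density_estimate (s : ℝ) (hs : 1 < s) :
    ∃ C : ℝ≥0∞, C ≠ ⊤ ∧
      ∀ (ω : Set Plane), MeasurableSet ω →
        ∀ (f : Plane → Plane → ℝ), Measurable (Function.uncurry f) → (∀ y v, 0 ≤ f y v) →
          ∀ (χ g : Plane → ℝ → ℂ), Measurable (Function.uncurry χ) →
            (∀ᵐ y ∂(volume.restrict ω), InH10C (χ y) (g y) ∧
              (∫ z in Set.Ioo (0:ℝ) 1, ‖χ y z‖ ^ 2) = 1) →
            (∫⁻ q in ω ×ˢ Set.Ioo (0:ℝ) 1,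
                ((∫⁻ v, ENNReal.ofReal (f q.1 v))
                  * ENNReal.ofReal (‖χ q.1 q.2‖ ^ 2)) ^ ((5*s - 3)/(3*s - 1)))
              ^ ((3*s - 1)/(5*s - 3))
            ≤ C * ((∫⁻ y in ω, (∫⁻ v, ENNReal.ofReal (f y v)) ^ ((2*s - 1)/s))
                      ^ (s/(2*s - 1))) ^ (2*(2*s - 1)/(5*s - 3))
                * (∫⁻ y in ω, (∫⁻ v, ENNReal.ofReal (f y v))
                      * ∫⁻ z in Set.Ioo (0:ℝ) 1, ENNReal.ofReal (‖g y z‖ ^ 2))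
                      ^ ((s - 1)/(5*s - 3)) := by
  have h31 : (0:ℝ) < 3*s - 1 := by linarith
  have h53 : (0:ℝ) < 5*s - 3 := by linarith
  have h2s1 : (0:ℝ) < 2*s - 1 := by linarith
  have hs0 : (0:ℝ) < s := by linarith
  set p : ℝ := (5*s - 3)/(3*s - 1) with hp
  have hp1 : 1 < p := (one_lt_div h31).mpr (by linarith)
  have hp3 : p < 3 := by rw [hp, div_lt_iff₀ h31]; linarith
  have hp0 : (0:ℝ) < p := by linarith
  have e0 : (3*s - 1)/(5*s - 3) = 1/p := by rw [hp, one_div_div]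
  have e1 : (p + 1)/(3 - p) = (2*s - 1)/s := by
    rw [div_eq_div_iff (ne_of_gt (by linarith : (0:ℝ) < 3 - p)) (ne_of_gt hs0), hp]
    field_simp [ne_of_gt (by linarith : (0:ℝ) < s*3-1), ne_of_gt (by linarith : (0:ℝ) < s*5-3), ne_of_gt (by linarith : (0:ℝ) < s*2-1)]
    ring
  have e2 : s/(2*s - 1) * (2*(2*s - 1)/(5*s - 3)) = (3 - p)/2 * (1/p) := by
    rw [hp]
    field_simp [ne_of_gt (by linarith : (0:ℝ) < s*3-1), ne_of_gt (by linarith : (0:ℝ) < s*5-3), ne_of_gt (by linarith : (0:ℝ) < s*2-1)]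
    ring
  have e3 : (s - 1)/(5*s - 3) = (p - 1)/2 * (1/p) := by
    rw [hp]
    field_simp [ne_of_gt (by linarith : (0:ℝ) < s*3-1), ne_of_gt (by linarith : (0:ℝ) < s*5-3), ne_of_gt (by linarith : (0:ℝ) < s*2-1)]
    ring
  refine ⟨2, by norm_num, ?_⟩
  intro ω hω f hf hf0 χ g hχ hae
  set ρ : Plane → ℝ≥0∞ := fun y => ∫⁻ v, ENNReal.ofReal (f y v) with hρ
  have hρm : Measurable ρ := by
    have : Measurable (fun q : Plane × Plane => ENNReal.ofReal (f q.1 q.2)) :=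
      ENNReal.measurable_ofReal.comp hf
    exact this.lintegral_prod_right'
  set X : Plane × ℝ → ℝ≥0∞ := fun q => ENNReal.ofReal (‖χ q.1 q.2‖ ^ 2) with hX
  have hXm : Measurable X := by
    refine ENNReal.measurable_ofReal.comp ?_
    have : Measurable fun q : Plane × ℝ => ‖Function.uncurry χ q‖ :=
      continuous_norm.measurable.comp hχ
    exact this.pow_const 2
  set Gf : Plane → ℝ≥0∞ :=
    fun y => ∫⁻ z in Set.Ioo (0:ℝ) 1, ENNReal.ofReal (‖g y z‖ ^ 2) with hGf
  show (∫⁻ q in ω ×ˢ Set.Ioo (0:ℝ) 1, (ρ q.1 * X q) ^ p) ^ ((3*s - 1)/(5*s - 3))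
    ≤ 2 * ((∫⁻ y in ω, ρ y ^ ((2*s - 1)/s)) ^ (s/(2*s - 1))) ^ (2*(2*s - 1)/(5*s - 3))
      * (∫⁻ y in ω, ρ y * Gf y) ^ ((s - 1)/(5*s - 3))
  set A : ℝ≥0∞ := ∫⁻ y in ω, ρ y ^ ((2*s - 1)/s) with hA
  set B : ℝ≥0∞ := ∫⁻ y in ω, ρ y * Gf y with hB
  have hrw : (volume : Measure (Plane × ℝ)).restrict (ω ×ˢ Set.Ioo (0:ℝ) 1)
      = ((volume : Measure Plane).restrict ω).prod ((volume : Measure ℝ).restrict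
        (Set.Ioo (0:ℝ) 1)) := by
    rw [Measure.volume_eq_prod, Measure.prod_restrict]
  have hFm : Measurable fun q : Plane × ℝ => (ρ q.1 * X q) ^ p :=
    ((hρm.comp measurable_fst).mul hXm).pow_const p
  have hT : (∫⁻ q in ω ×ˢ Set.Ioo (0:ℝ) 1, (ρ q.1 * X q) ^ p)
      ≤ 2 ^ (p - 1) * (A ^ ((3 - p)/2) * B ^ ((p - 1)/2)) := by
    rw [hrw, lintegral_prod _ hFm.aemeasurable]
    have hinner : ∀ y : Plane,
        (∫⁻ z, (ρ (y, z).1 * X (y, z)) ^ p ∂(volume.restrict (Set.Ioo (0:ℝ) 1)))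
          = ρ y ^ p * ∫⁻ z in Set.Ioo (0:ℝ) 1, X (y, z) ^ p := by
      intro y
      have hm : AEMeasurable (fun z : ℝ => X (y, z) ^ p)
          (volume.restrict (Set.Ioo (0:ℝ) 1)) :=
        (((hXm.comp measurable_prodMk_left).pow_const p).aemeasurable)
      rw [← lintegral_const_mul'' (ρ y ^ p) hm]
      exact lintegral_congr fun z => ENNReal.mul_rpow_of_nonneg _ _ hp0.le
    calc ∫⁻ y in ω, ∫⁻ z, (ρ (y, z).1 * X (y, z)) ^ p ∂(volume.restrict (Set.Ioo (0:ℝ) 1))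
        = ∫⁻ y in ω, ρ y ^ p * ∫⁻ z in Set.Ioo (0:ℝ) 1, X (y, z) ^ p :=
          lintegral_congr hinner
      _ ≤ ∫⁻ y in ω, 2 ^ (p - 1) * (ρ y ^ p * Gf y ^ ((p - 1)/2)) := by
          refine lintegral_mono_ae ?_
          filter_upwards [hae] with y hy
          calc ρ y ^ p * ∫⁻ z in Set.Ioo (0:ℝ) 1, X (y, z) ^ p
              ≤ ρ y ^ p * (2 ^ (p - 1) * Gf y ^ ((p - 1)/2)) :=
                mul_le_mul_right (perfn hp1.le hy.1 hy.2) _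
            _ = 2 ^ (p - 1) * (ρ y ^ p * Gf y ^ ((p - 1)/2)) := by ring
      _ = 2 ^ (p - 1) * ∫⁻ y in ω, ρ y ^ p * Gf y ^ ((p - 1)/2) :=
          lintegral_const_mul' _ _ (ENNReal.rpow_ne_top_of_nonneg (by linarith)
            (by norm_num))
      _ ≤ 2 ^ (p - 1) * (A ^ ((3 - p)/2) * B ^ ((p - 1)/2)) := by
          refine mul_le_mul_right ?_ _
          have hH := holder_nonmeas (μ := volume.restrict ω) (G := Gf) hρm hp1 hp3
          rw [e1] at hH
          exact hH
  have h1p0 : (0:ℝ) ≤ 1/p := by positivity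
  calc (∫⁻ q in ω ×ˢ Set.Ioo (0:ℝ) 1, (ρ q.1 * X q) ^ p) ^ ((3*s - 1)/(5*s - 3))
      = (∫⁻ q in ω ×ˢ Set.Ioo (0:ℝ) 1, (ρ q.1 * X q) ^ p) ^ (1/p) := by rw [e0]
    _ ≤ (2 ^ (p - 1) * (A ^ ((3 - p)/2) * B ^ ((p - 1)/2))) ^ (1/p) :=
        ENNReal.rpow_le_rpow hT h1p0
    _ = 2 ^ ((p - 1) * (1/p)) * (A ^ ((3 - p)/2 * (1/p)) * B ^ ((p - 1)/2 * (1/p))) := by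
        rw [ENNReal.mul_rpow_of_nonneg _ _ h1p0, ENNReal.mul_rpow_of_nonneg _ _ h1p0,
          ← ENNReal.rpow_mul, ← ENNReal.rpow_mul, ← ENNReal.rpow_mul]
    _ ≤ 2 * (A ^ ((3 - p)/2 * (1/p)) * B ^ ((p - 1)/2 * (1/p))) := by
        refine mul_le_mul_left ?_ _
        have : ((2:ℝ≥0∞)) ^ ((p - 1) * (1/p)) ≤ 2 ^ (1:ℝ) := by
          refine ENNReal.rpow_le_rpow_of_exponent_le (by norm_num) ?_
          rw [mul_one_div, div_le_one hp0]
          linarith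
        simpa using this
    _ = 2 * ((A ^ (s/(2*s - 1))) ^ (2*(2*s - 1)/(5*s - 3))) * B ^ ((s - 1)/(5*s - 3)) := by
        rw [← e2, ← e3, ENNReal.rpow_mul, mul_assoc]
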